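/- Let K be a field and R a Noetherian commutative ℕ-graded K-algebra which is an integral domain with R₀ = K·1. Let f₁,…,f_k ∈ R be homogeneous elements of positive degree and let p₁,…,p_k ≥ 1 be integers. Then f₁,…,f_k is a regular sequence in R if and only if f₁^{p₁},…,f_k^{p_k} is a regular sequence in R. -/

import Mathlib

open DirectSum Ideal

section Core
variable {K R : Type*} [Field K] [CommRing R] [Algebra K R]
    (𝒜 : ℕ → Submodule K R) [GradedAlgebra 𝒜]

/-- `a` is a non-zero-divisor modulo `I`. -/
def NZD (I : Ideal R) (a : R) : Prop := ∀ g, g * a ∈ I → g ∈ I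

/-- Weakly regular sequence (list form), relative to a base ideal. -/
def WSeq (I : Ideal R) : List R → Prop
  | [] => True
  | a :: L => NZD I a ∧ WSeq (I ⊔ Ideal.span {a}) L

variable {𝒜}

lemma decompose_mul_of_le {a : R} {da : ℕ} (ha : a ∈ 𝒜 da) (h : R) {n : ℕ} (hn : da ≤ n) :
    (decompose 𝒜 (a * h) n : R) = a * (decompose 𝒜 h (n - da) : R) := by
  have := DirectSum.coe_decompose_mul_add_of_left_mem 𝒜 (i := da) (j := n - da) ha (b := h)
  rwa [Nat.add_sub_cancel' hn] at this

lemma decompose_mul_of_lt {a : R} {da : ℕ} (ha : a ∈ 𝒜 da) (h : R) {n : ℕ} (hn : n < da) :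
    (decompose 𝒜 (a * h) n : R) = 0 := by
  classical
  rw [← GradedRing.proj_apply]
  conv_lhs => rw [← DirectSum.sum_support_decompose 𝒜 h]
  rw [Finset.mul_sum, map_sum]
  refine Finset.sum_eq_zero fun i _ => ?_
  rw [GradedRing.proj_apply]
  have hmem : a * (decompose 𝒜 h i : R) ∈ 𝒜 (da + i) :=
    SetLike.mul_mem_graded ha (SetLike.coe_mem _)
  rw [DirectSum.decompose_of_mem_ne 𝒜 hmem (by omega)]

/-- Graded Nakayama: if `K ⊆ I + a·K` with `a` homogeneous of positive degree
and `I`, `K` graded ideals, then `K ⊆ I`. -/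
lemma graded_nakayama {I J : Ideal R} (hI : I.IsHomogeneous 𝒜) (hJ : J.IsHomogeneous 𝒜)
    {a : R} {da : ℕ} (ha : a ∈ 𝒜 da) (hda : 0 < da)
    (hstep : ∀ g ∈ J, ∃ x ∈ I, ∃ h ∈ J, g = x + a * h) : J ≤ I := by
  suffices H : ∀ n, ∀ g ∈ J, g ∈ 𝒜 n → g ∈ I by
    intro g hg
    rw [hI.mem_iff]
    exact fun i => H i _ (hJ i hg) (SetLike.coe_mem _)
  intro n
  induction n using Nat.strong_induction_on with
  | _ n ih =>
    intro g hgJ hgn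
    obtain ⟨x, hx, h, hh, rfl⟩ := hstep g hgJ
    have hsame : (decompose 𝒜 (x + a * h) n : R) = x + a * h :=
      DirectSum.decompose_of_mem_same 𝒜 hgn
    rcases le_or_gt da n with hle | hlt
    · have hd : (decompose 𝒜 (x + a * h) n : R)
          = (decompose 𝒜 x n : R) + a * (decompose 𝒜 h (n - da) : R) := by
        rw [DirectSum.decompose_add, DirectSum.add_apply, Submodule.coe_add,
          decompose_mul_of_le ha h hle]
      have hhn : (decompose 𝒜 h (n - da) : R) ∈ I :=
        ih (n - da) (by omega) _ (hJ _ hh) (SetLike.coe_mem _)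
      rw [← hsame, hd]
      exact add_mem (hI n hx) (mul_mem_left _ _ hhn)
    · have hd : (decompose 𝒜 (x + a * h) n : R) = (decompose 𝒜 x n : R) := by
        rw [DirectSum.decompose_add, DirectSum.add_apply, Submodule.coe_add,
          decompose_mul_of_lt ha h hlt, add_zero]
      rw [← hsame, hd]
      exact hI n hx

lemma span_singleton_homogeneous {a : R} {da : ℕ} (ha : a ∈ 𝒜 da) :
    (Ideal.span {a} : Ideal R).IsHomogeneous 𝒜 :=
  Ideal.homogeneous_span 𝒜 {a} (by rintro x rfl; exact ⟨da, ha⟩)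

/-- Swap lemma, first conclusion: if `a` is NZD mod `I` and `b` is NZD mod `I + (a)`,
then `b` is NZD mod `I`. (Needs `a` of positive degree; graded Nakayama.) -/
lemma nzd_swap₁ {I : Ideal R} (hI : I.IsHomogeneous 𝒜)
    {a b : R} {da db : ℕ} (ha : a ∈ 𝒜 da) (hda : 0 < da) (hb : b ∈ 𝒜 db)
    (H1 : NZD I a) (H2 : NZD (I ⊔ Ideal.span {a}) b) : NZD I b := by
  set J : Ideal R := I.colon (Ideal.span {b}) with hJdef
  have hJmem : ∀ g : R, g ∈ J ↔ g * b ∈ I := fun g => Ideal.mem_colon_span_singleton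
  have hJ : J.IsHomogeneous 𝒜 := by
    intro i r hr
    rw [hJmem] at hr ⊢
    have := hI (i + db) hr
    rwa [DirectSum.coe_decompose_mul_add_of_right_mem 𝒜 hb] at this
  have hle : J ≤ I := by
    refine graded_nakayama hI hJ ha hda ?_
    intro g hg
    have hgb : g * b ∈ I := (hJmem g).1 hg
    have : g ∈ I ⊔ Ideal.span {a} := H2 g (Ideal.mem_sup_left hgb)
    obtain ⟨x, hx, y, hy, hxy⟩ := Submodule.mem_sup.1 this
    obtain ⟨t, rfl⟩ := Ideal.mem_span_singleton'.1 hy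
    refine ⟨x, hx, t, ?_, by rw [← hxy]; ring⟩
    rw [hJmem]
    have h1 : (t * b) * a ∈ I := by
      have : t * a * b = g * b - x * b := by rw [← hxy]; ring
      have h2 : t * a * b ∈ I := by
        rw [this]; exact sub_mem hgb (mul_mem_right _ _ hx)
      have h3 : (t * b) * a = t * a * b := by ring
      rwa [h3]
    exact H1 _ h1
  intro g hg
  exact hle ((hJmem g).2 hg)

/-- Swap lemma, second conclusion: `a` is NZD mod `I + (b)`. (Pure algebra.) -/
lemma nzd_swap₂ {I : Ideal R} {a b : R}
    (H1 : NZD I a) (H2 : NZD (I ⊔ Ideal.span {a}) b) : NZD (I ⊔ Ideal.span {b}) a := by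
  intro g hg
  obtain ⟨x, hx, y, hy, hxy⟩ := Submodule.mem_sup.1 hg
  obtain ⟨t, rfl⟩ := Ideal.mem_span_singleton'.1 hy
  have htb : t * b ∈ I ⊔ Ideal.span {a} := by
    have : t * b = g * a - x := by rw [← hxy]; ring
    rw [this]
    exact sub_mem (Ideal.mem_sup_right (Ideal.mem_span_singleton'.2 ⟨g, rfl⟩)) (Ideal.mem_sup_left hx)
  obtain ⟨x', hx', y', hy', hxy'⟩ := Submodule.mem_sup.1 (H2 t htb)
  obtain ⟨s, rfl⟩ := Ideal.mem_span_singleton'.1 hy'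
  have key : (g - s * b) * a ∈ I := by
    have : (g - s * b) * a = x + x' * b := by
      have e1 : g * a = x + (x' + s * a) * b := by rw [← hxy, ← hxy']
      linear_combination e1
    rw [this]
    exact add_mem hx (mul_mem_right _ _ hx')
  have := H1 _ key
  have : g = (g - s * b) + s * b := by ring
  rw [this]
  exact add_mem (Ideal.mem_sup_left (H1 _ key))
    (Ideal.mem_sup_right (Ideal.mem_span_singleton'.2 ⟨s, rfl⟩))

variable (𝒜) in
/-- All elements of the list are homogeneous of positive degree. -/
def HomPos (L : List R) : Prop := ∀ x ∈ L, ∃ d, 0 < d ∧ x ∈ 𝒜 d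

lemma sup_span_homogeneous {I : Ideal R} (hI : I.IsHomogeneous 𝒜) {a : R} {da : ℕ}
    (ha : a ∈ 𝒜 da) : (I ⊔ Ideal.span {a}).IsHomogeneous 𝒜 :=
  hI.sup (span_singleton_homogeneous ha)

lemma wseq_swap {I : Ideal R} (hI : I.IsHomogeneous 𝒜) {a b : R} {da db : ℕ}
    (ha : a ∈ 𝒜 da) (hda : 0 < da) (hb : b ∈ 𝒜 db) (hdb : 0 < db) (L : List R) :
    WSeq I (a :: b :: L) ↔ WSeq I (b :: a :: L) := by
  have hIJ : I ⊔ Ideal.span {a} ⊔ Ideal.span {b} = I ⊔ Ideal.span {b} ⊔ Ideal.span {a} := by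
    rw [sup_assoc, sup_assoc, sup_comm (Ideal.span {a})]
  constructor
  · rintro ⟨H1, H2, H3⟩
    exact ⟨nzd_swap₁ hI ha hda hb H1 H2, nzd_swap₂ H1 H2, by rwa [← hIJ]⟩
  · rintro ⟨H1, H2, H3⟩
    exact ⟨nzd_swap₁ hI hb hdb ha H1 H2, nzd_swap₂ H1 H2, by rwa [hIJ]⟩

lemma wseq_rotate {L : List R} (hL : HomPos 𝒜 L) :
    ∀ {I : Ideal R}, I.IsHomogeneous 𝒜 → ∀ {a : R} {da : ℕ}, a ∈ 𝒜 da → 0 < da →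
      (WSeq I (a :: L) ↔ WSeq I (L ++ [a])) := by
  induction L with
  | nil => intro I _ a da _ _; simp
  | cons b L ih =>
    intro I hI a da ha hda
    obtain ⟨db, hdb, hb⟩ := hL b List.mem_cons_self
    have hL' : HomPos 𝒜 L := fun x hx => hL x (List.mem_cons_of_mem _ hx)
    rw [wseq_swap hI ha hda hb hdb]
    show (NZD I b ∧ WSeq (I ⊔ Ideal.span {b}) (a :: L)) ↔
      (NZD I b ∧ WSeq (I ⊔ Ideal.span {b}) (L ++ [a]))
    rw [ih hL' (sup_span_homogeneous hI hb) ha hda]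

lemma nzd_pow {I : Ideal R} {a : R} {n : ℕ} (hn : 1 ≤ n) : NZD I a ↔ NZD I (a ^ n) := by
  constructor
  · intro H
    have aux : ∀ m (g : R), g * a ^ m ∈ I → g ∈ I := by
      intro m
      induction m with
      | zero => intro g hg; simpa using hg
      | succ m ihm =>
        intro g hg
        refine ihm g (H _ ?_)
        rw [show g * a ^ m * a = g * a ^ (m + 1) by ring]
        exact hg
    exact aux n
  · intro H g hg
    apply H
    have : g * a ^ n = (g * a) * a ^ (n - 1) := by
      rw [mul_assoc, ← pow_succ']
      congr 2
      omega
    rw [this]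
    exact Ideal.mul_mem_right _ _ hg

lemma wseq_last_pow {a : R} {n : ℕ} (hn : 1 ≤ n) :
    ∀ (L : List R) (I : Ideal R), WSeq I (L ++ [a]) ↔ WSeq I (L ++ [a ^ n]) := by
  intro L
  induction L with
  | nil =>
    intro I
    show (NZD I a ∧ True) ↔ (NZD I (a ^ n) ∧ True)
    rw [nzd_pow hn]
  | cons b L ih =>
    intro I
    show (NZD I b ∧ WSeq (I ⊔ Ideal.span {b}) (L ++ [a])) ↔
      (NZD I b ∧ WSeq (I ⊔ Ideal.span {b}) (L ++ [a ^ n]))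
    rw [ih]

lemma wseq_head_pow {I : Ideal R} (hI : I.IsHomogeneous 𝒜) {a : R} {da : ℕ}
    (ha : a ∈ 𝒜 da) (hda : 0 < da) {n : ℕ} (hn : 1 ≤ n) {L : List R} (hL : HomPos 𝒜 L) :
    WSeq I (a :: L) ↔ WSeq I (a ^ n :: L) := by
  have han : a ^ n ∈ 𝒜 (n * da) := by
    have := SetLike.pow_mem_graded n ha
    rwa [smul_eq_mul] at this
  have hdan : 0 < n * da := Nat.mul_pos hn hda
  rw [wseq_rotate hL hI ha hda, wseq_rotate hL hI han hdan, wseq_last_pow hn]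

/-- Main list-level lemma: raising each entry to a positive power preserves weak
regularity (both directions), for homogeneous positive-degree entries. -/
lemma wseq_pow_iff : ∀ (L : List (R × ℕ)) (I : Ideal R), I.IsHomogeneous 𝒜 →
    (∀ x ∈ L, (∃ d, 0 < d ∧ x.1 ∈ 𝒜 d) ∧ 1 ≤ x.2) →
    (WSeq I (L.map Prod.fst) ↔ WSeq I (L.map fun x => x.1 ^ x.2)) := by
  intro L
  induction L with
  | nil => intro I _ _; simp
  | cons c L ih =>
    intro I hI hL
    obtain ⟨⟨d, hd, hc⟩, hn⟩ := hL c List.mem_cons_self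
    have hL' := fun x hx => hL x (List.mem_cons_of_mem _ hx)
    have hHP : HomPos 𝒜 (L.map fun x => x.1 ^ x.2) := by
      intro y hy
      obtain ⟨x, hx, rfl⟩ := List.mem_map.1 hy
      obtain ⟨⟨e, he, hx1⟩, hx2⟩ := hL' x hx
      refine ⟨x.2 * e, Nat.mul_pos (hL' x hx).2 he, ?_⟩
      have := SetLike.pow_mem_graded x.2 hx1
      rwa [smul_eq_mul] at this
    show WSeq I (c.1 :: L.map Prod.fst) ↔ WSeq I (c.1 ^ c.2 :: L.map fun x => x.1 ^ x.2)
    have step1 : WSeq I (c.1 :: L.map Prod.fst) ↔ WSeq I (c.1 :: L.map fun x => x.1 ^ x.2) := by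
      show (NZD I c.1 ∧ WSeq (I ⊔ Ideal.span {c.1}) (L.map Prod.fst)) ↔
        (NZD I c.1 ∧ WSeq (I ⊔ Ideal.span {c.1}) (L.map fun x => x.1 ^ x.2))
      rw [ih _ (sup_span_homogeneous hI hc) hL']
    rw [step1, wseq_head_pow hI hc hd hn hHP]

lemma set_lt_succ {k : ℕ} (i : Fin k) :
    {j : Fin (k + 1) | j < i.succ} = insert 0 (Fin.succ '' {j : Fin k | j < i}) := by
  ext j
  induction j using Fin.cases with
  | zero => simp [Fin.succ_pos]
  | succ j' =>
    simp only [Set.mem_setOf_eq, Fin.succ_lt_succ_iff, Set.mem_insert_iff, Set.mem_image]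
    constructor
    · intro h; exact Or.inr ⟨j', h, rfl⟩
    · rintro (h | ⟨x, hx, hxe⟩)
      · exact absurd h (Fin.succ_ne_zero j')
      · rwa [← Fin.succ_inj.1 hxe]

lemma fin_cond_iff : ∀ {k : ℕ} (f : Fin k → R) (I : Ideal R),
    (∀ (i : Fin k) (g : R),
      g * f i ∈ I ⊔ Ideal.span (f '' {j : Fin k | j < i}) →
        g ∈ I ⊔ Ideal.span (f '' {j : Fin k | j < i}))
    ↔ WSeq I (List.ofFn f) := by
  intro k
  induction k with
  | zero =>
    intro f I
    simp only [List.ofFn_zero]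
    exact ⟨fun _ => trivial, fun _ i => i.elim0⟩
  | succ k ih =>
    intro f I
    rw [List.ofFn_succ]
    have E0 : I ⊔ Ideal.span (f '' {j : Fin (k + 1) | j < 0}) = I := by
      have : {j : Fin (k + 1) | j < 0} = ∅ := by
        ext j; simp [Fin.not_lt_zero]
      rw [this, Set.image_empty, Ideal.span_empty, sup_bot_eq]
    have Eim : ∀ i : Fin k, f '' {j : Fin (k + 1) | j < i.succ}
        = insert (f 0) ((fun j : Fin k => f j.succ) '' {j : Fin k | j < i}) := by
      intro i
      rw [set_lt_succ, Set.image_insert_eq, ← Set.image_comp]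
      rfl
    have E : ∀ i : Fin k,
        I ⊔ Ideal.span (f '' {j : Fin (k + 1) | j < i.succ})
          = (I ⊔ Ideal.span {f 0})
            ⊔ Ideal.span ((fun j : Fin k => f j.succ) '' {j : Fin k | j < i}) := by
      intro i
      rw [Eim i, Ideal.span_insert, ← sup_assoc]
    show _ ↔ (NZD I (f 0) ∧ WSeq (I ⊔ Ideal.span {f 0}) (List.ofFn fun i => f i.succ))
    rw [← ih (fun i => f i.succ) (I ⊔ Ideal.span {f 0})]
    constructor
    · intro H
      constructor
      · intro g hg
        have := H 0 g (by rw [E0]; exact hg)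
        rwa [E0] at this
      · intro i g hg
        have := H i.succ g (by rw [E i]; exact hg)
        rwa [E i] at this
    · rintro ⟨H0, H⟩ i g
      induction i using Fin.cases with
      | zero =>
        intro hg
        rw [E0] at hg ⊢
        exact H0 g hg
      | succ i' =>
        intro hg
        rw [E i'] at hg ⊢
        exact H i' g hg

lemma span_homog_pos_ne_top [Nontrivial R] {k : ℕ} (f : Fin k → R)
    (hyp : ∀ i, ∃ d, 0 < d ∧ f i ∈ 𝒜 d) : Ideal.span (Set.range f) ≠ ⊤ := by
  intro htop
  have hker : Ideal.span (Set.range f) ≤ RingHom.ker (GradedRing.projZeroRingHom 𝒜) := by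
    rw [Ideal.span_le]
    rintro x ⟨i, rfl⟩
    obtain ⟨d, hd, hm⟩ := hyp i
    show GradedRing.projZeroRingHom 𝒜 (f i) = 0
    rw [GradedRing.projZeroRingHom_apply]
    exact DirectSum.decompose_of_mem_ne 𝒜 hm (by omega)
  have h1 : (1 : R) ∈ RingHom.ker (GradedRing.projZeroRingHom 𝒜) :=
    hker (htop ▸ Submodule.mem_top)
  rw [RingHom.mem_ker, map_one] at h1
  exact one_ne_zero h1

end Core


/-- A sequence `f 0, …, f (r-1)` of elements of a commutative ring is a regular sequence:
the ideal it generates is proper, and for each `i` the image of `f i` is a non-zero-divisor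
modulo the ideal generated by the previous elements. -/
def IsRegSeq {S : Type*} [CommRing S] {r : ℕ} (f : Fin r → S) : Prop :=
  Ideal.span (Set.range f) ≠ ⊤ ∧
    ∀ (i : Fin r) (g : S),
      g * f i ∈ Ideal.span (f '' {j : Fin r | j < i}) →
        g ∈ Ideal.span (f '' {j : Fin r | j < i})

/-- In a Noetherian connected ℕ-graded domain `R` over a field `K`, for
homogeneous `f₁,…,f_k` of positive degree and integers `p₁,…,p_k ≥ 1`, the sequence
`f₁,…,f_k` is regular in `R` if and only if `f₁^{p₁},…,f_k^{p_k}` is regular in `R`. -/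
theorem stmt6 {K R : Type*} [Field K] [CommRing R] [Algebra K R]
    [IsNoetherianRing R] [IsDomain R]
    (𝒜 : ℕ → Submodule K R) [GradedAlgebra 𝒜] (h0 : 𝒜 0 = 1)
    {k : ℕ} (f : Fin k → R) (df : Fin k → ℕ)
    (hf : ∀ i, f i ∈ 𝒜 (df i)) (hdf : ∀ i, 0 < df i)
    (p : Fin k → ℕ) (hp : ∀ i, 1 ≤ p i) :
    IsRegSeq f ↔ IsRegSeq (fun i => f i ^ p i) := by
  have hfp : ∀ i, f i ^ p i ∈ 𝒜 (p i * df i) := fun i => by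
    simpa [smul_eq_mul] using SetLike.pow_mem_graded (p i) (hf i)
  have hprop1 : Ideal.span (Set.range f) ≠ ⊤ :=
    span_homog_pos_ne_top (𝒜 := 𝒜) f fun i => ⟨df i, hdf i, hf i⟩
  have hprop2 : Ideal.span (Set.range fun i => f i ^ p i) ≠ ⊤ :=
    span_homog_pos_ne_top (𝒜 := 𝒜) _ fun i =>
      ⟨p i * df i, Nat.mul_pos (hp i) (hdf i), hfp i⟩
  have key : ∀ (h : Fin k → R),
      (∀ (i : Fin k) (g : R),
        g * h i ∈ Ideal.span (h '' {j : Fin k | j < i}) →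
          g ∈ Ideal.span (h '' {j : Fin k | j < i}))
      ↔ WSeq ⊥ (List.ofFn h) := by
    intro h
    have := fin_cond_iff h ⊥
    simpa only [bot_sup_eq] using this
  have main : WSeq ⊥ (List.ofFn f) ↔ WSeq ⊥ (List.ofFn fun i => f i ^ p i) := by
    have := wseq_pow_iff (𝒜 := 𝒜) (List.ofFn fun i => (f i, p i)) ⊥
      (Ideal.IsHomogeneous.bot 𝒜) ?_
    · rwa [List.map_ofFn, List.map_ofFn] at this
    · intro x hx
      rw [List.mem_ofFn] at hx
      obtain ⟨i, rfl⟩ := hx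
      exact ⟨⟨df i, hdf i, hf i⟩, hp i⟩
  unfold IsRegSeq
  rw [key f, key (fun i => f i ^ p i)]
  exact ⟨fun ⟨_, h2⟩ => ⟨hprop2, main.1 h2⟩, fun ⟨_, h2⟩ => ⟨hprop1, main.2 h2⟩⟩
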